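/- Let Ω be a compact metric space with continuous flow σ admitting a point ω₀ with dense orbit. Let Ω₋ be the α-limit set of ω₀ and Ω₊ its ω-limit set. Then Ω = Ω₋ ∪ {ω₀·t : t ∈ ℝ} ∪ Ω₊. Moreover, if Ω ≠ Ω₋ and Ω ≠ Ω₊, then the set of points with dense orbit is exactly the orbit of ω₀. -/

import Mathlib

open Set Filter Topology

/-- if `ω₀` has dense orbit under a continuous flow on a compact metric
space, then the space decomposes as the α-limit set of `ω₀`, the orbit of `ω₀`, and
the ω-limit set of `ω₀`; if moreover both limit sets are proper, the points with dense
orbit are exactly the orbit of `ω₀`. -/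
theorem transitive_hull_structure
    {Ω : Type*} [MetricSpace Ω] [CompactSpace Ω]
    (σ : ℝ → Ω → Ω)
    (hcont : Continuous fun p : ℝ × Ω => σ p.1 p.2)
    (hzero : ∀ ω, σ 0 ω = ω)
    (hadd : ∀ s t ω, σ (s + t) ω = σ s (σ t ω))
    (ω₀ : Ω)
    (hdense : Dense (Set.range fun t : ℝ => σ t ω₀))
    (Ωminus Ωplus : Set Ω)
    (hα : Ωminus = ⋂ s : ℝ, closure {x : Ω | ∃ t ≤ -s, σ t ω₀ = x})
    (hω : Ωplus = ⋂ s : ℝ, closure {x : Ω | ∃ t ≥ s, σ t ω₀ = x}) :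
    (Set.univ : Set Ω) = Ωminus ∪ (Set.range fun t : ℝ => σ t ω₀) ∪ Ωplus ∧
    ((Ωminus ≠ Set.univ ∧ Ωplus ≠ Set.univ) →
      {ω : Ω | Dense (Set.range fun t : ℝ => σ t ω)}
        = Set.range fun t : ℝ => σ t ω₀) := by
  set f : ℝ → Ω := fun t => σ t ω₀ with hfdef
  have hf : Continuous f := hcont.comp (continuous_id.prodMk continuous_const)
  have hσc : ∀ u : ℝ, Continuous (σ u) := fun u =>
    hcont.comp (continuous_const.prodMk continuous_id)
  have hsetm : ∀ s : ℝ, {x : Ω | ∃ t ≤ -s, σ t ω₀ = x} = f '' Set.Iic (-s) := by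
    intro s; ext x
    simp only [Set.mem_setOf_eq, Set.mem_image, Set.mem_Iic, hfdef]
  have hsetp : ∀ s : ℝ, {x : Ω | ∃ t ≥ s, σ t ω₀ = x} = f '' Set.Ici s := by
    intro s; ext x
    simp only [Set.mem_setOf_eq, Set.mem_image, Set.mem_Ici, ge_iff_le, hfdef]
  -- the decomposition
  have hdecomp : (Set.univ : Set Ω) = Ωminus ∪ Set.range f ∪ Ωplus := by
    refine Set.eq_of_subset_of_subset ?_ (Set.subset_univ _)
    intro x _
    by_contra hx
    simp only [Set.mem_union, not_or] at hx
    obtain ⟨⟨hxm, hxo⟩, hxp⟩ := hx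
    rw [hα] at hxm; rw [hω] at hxp
    simp only [Set.mem_iInter, not_forall] at hxm hxp
    obtain ⟨s₁, hs₁⟩ := hxm
    obtain ⟨s₂, hs₂⟩ := hxp
    rw [hsetm] at hs₁; rw [hsetp] at hs₂
    set s : ℝ := max (max s₁ s₂) 0 with hs
    have hs₁le : s₁ ≤ s := le_max_of_le_left (le_max_left _ _)
    have hs₂le : s₂ ≤ s := le_max_of_le_left (le_max_right _ _)
    have h1 : x ∉ closure (f '' Set.Iic (-s)) := fun h =>
      hs₁ (closure_mono (Set.image_mono (f := f) (Set.Iic_subset_Iic.mpr (by linarith))) h)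
    have h2 : x ∉ closure (f '' Set.Ici s) := fun h =>
      hs₂ (closure_mono (Set.image_mono (f := f) (Set.Ici_subset_Ici.mpr hs₂le)) h)
    have hcov : Set.range f ⊆ f '' Set.Iic (-s) ∪ f '' Set.Icc (-s) s ∪ f '' Set.Ici s := by
      rintro _ ⟨t, rfl⟩
      rcases le_total t (-s) with h | h
      · exact Or.inl (Or.inl ⟨t, h, rfl⟩)
      · rcases le_total t s with h' | h'
        · exact Or.inl (Or.inr ⟨t, ⟨h, h'⟩, rfl⟩)
        · exact Or.inr ⟨t, h', rfl⟩
    have hxcl : x ∈ closure (Set.range f) := hdense x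
    have := closure_mono hcov hxcl
    rw [closure_union, closure_union] at this
    rcases this with (h | h) | h
    · exact h1 h
    · rw [((isCompact_Icc.image hf).isClosed).closure_eq] at h
      exact hxo (Set.image_subset_range f _ h)
    · exact h2 h
  refine ⟨hdecomp, ?_⟩
  rintro ⟨hne₁, hne₂⟩
  -- invariance of the limit sets
  have hinvm : ∀ (u : ℝ) (x : Ω), x ∈ Ωminus → σ u x ∈ Ωminus := by
    intro u x hx
    rw [hα, Set.mem_iInter] at hx ⊢
    intro s
    rw [hsetm]
    have hx' := hx (s + u)
    rw [hsetm] at hx'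
    have hmem : σ u x ∈ σ u '' closure (f '' Set.Iic (-(s + u))) := ⟨x, hx', rfl⟩
    have h2 := (image_closure_subset_closure_image (hσc u)) hmem
    refine closure_mono ?_ h2
    rintro _ ⟨_, ⟨t, ht, rfl⟩, rfl⟩
    exact ⟨u + t, by simp only [Set.mem_Iic] at ht ⊢; linarith, hadd u t ω₀⟩
  have hinvp : ∀ (u : ℝ) (x : Ω), x ∈ Ωplus → σ u x ∈ Ωplus := by
    intro u x hx
    rw [hω, Set.mem_iInter] at hx ⊢
    intro s
    rw [hsetp]
    have hx' := hx (s - u)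
    rw [hsetp] at hx'
    have hmem : σ u x ∈ σ u '' closure (f '' Set.Ici (s - u)) := ⟨x, hx', rfl⟩
    have h2 := (image_closure_subset_closure_image (hσc u)) hmem
    refine closure_mono ?_ h2
    rintro _ ⟨_, ⟨t, ht, rfl⟩, rfl⟩
    exact ⟨u + t, by simp only [Set.mem_Ici] at ht ⊢; linarith, hadd u t ω₀⟩
  have hclm : IsClosed Ωminus := by
    rw [hα]; exact isClosed_iInter fun s => isClosed_closure
  have hclp : IsClosed Ωplus := by
    rw [hω]; exact isClosed_iInter fun s => isClosed_closure
  ext ω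
  simp only [Set.mem_setOf_eq]
  constructor
  · intro hω'
    have hωm : ω ∉ Ωminus := by
      intro h
      have hsub : Set.range (fun t => σ t ω) ⊆ Ωminus := by
        rintro _ ⟨t, rfl⟩; exact hinvm t ω h
      have : (Set.univ : Set Ω) ⊆ Ωminus := by
        rw [← hω'.closure_eq]
        exact closure_minimal hsub hclm
      exact hne₁ (Set.eq_univ_of_univ_subset this)
    have hωp : ω ∉ Ωplus := by
      intro h
      have hsub : Set.range (fun t => σ t ω) ⊆ Ωplus := by
        rintro _ ⟨t, rfl⟩; exact hinvp t ω h
      have : (Set.univ : Set Ω) ⊆ Ωplus := by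
        rw [← hω'.closure_eq]
        exact closure_minimal hsub hclp
      exact hne₂ (Set.eq_univ_of_univ_subset this)
    have : ω ∈ Ωminus ∪ Set.range f ∪ Ωplus := hdecomp ▸ Set.mem_univ ω
    rcases this with (h | h) | h
    · exact absurd h hωm
    · exact h
    · exact absurd h hωp
  · rintro ⟨t₀, rfl⟩
    have hrange : (Set.range fun t => σ t (f t₀)) = Set.range f := by
      ext x
      constructor
      · rintro ⟨t, rfl⟩; exact ⟨t + t₀, (hadd t t₀ ω₀)⟩
      · rintro ⟨t, rfl⟩
        refine ⟨t - t₀, ?_⟩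
        show σ (t - t₀) (σ t₀ ω₀) = σ t ω₀
        rw [← hadd, sub_add_cancel]
    rw [hrange]
    exact hdense
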